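/- Let ℓ ≥ 2 be an integer, let V be a finite set with |V| ≥ ℓ, let r ∈ V, and let α, β : V → ℝ≥0 satisfy: α_r ≤ β_r; β_v ≥ ⌈α_v⌉ − 1/ℓ for every v ∈ V ∖ {r}; and Σ_{v∈V} β_v ≥ (|V| − 1)·(1 − 1/ℓ). Then Σ_{v∈V} ⌈α_v⌉ ≤ (1 + (2ℓ−1)/(ℓ−1)²)·Σ_{v∈V} β_v. -/

import Mathlib

/-- **Facility-counting inequality at the end of Section 4.4 (case `|C*| ≥ ℓ`).**
If `a r ≤ b r`, `b v ≥ ⌈a v⌉ − 1/ℓ` for every non-root `v`, and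
`Σ_v b v ≥ (|V|−1)(1−1/ℓ)` with `|V| ≥ ℓ`, then
`Σ_v ⌈a v⌉ ≤ (1 + (2ℓ−1)/(ℓ−1)²)·Σ_v b v`. -/
theorem stmt17 (α : Type) (ℓ : ℕ) (hℓ : 2 ≤ ℓ)
    (V : Finset α) (hV : ℓ ≤ V.card) (r : α) (hr : r ∈ V)
    (a b : α → ℝ)
    (ha0 : ∀ v ∈ V, 0 ≤ a v) (hb0 : ∀ v ∈ V, 0 ≤ b v)
    (har : a r ≤ b r)
    (hab : ∀ v ∈ V, v ≠ r → (⌈a v⌉ : ℝ) - 1 / (ℓ : ℝ) ≤ b v)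
    (hsum : ((V.card : ℝ) - 1) * (1 - 1 / (ℓ : ℝ)) ≤ ∑ v ∈ V, b v) :
    ∑ v ∈ V, (⌈a v⌉ : ℝ) ≤
      (1 + (2 * (ℓ : ℝ) - 1) / ((ℓ : ℝ) - 1) ^ 2) * ∑ v ∈ V, b v := by
  classical
  have hℓR : (2 : ℝ) ≤ (ℓ : ℝ) := by exact_mod_cast hℓ
  have hℓpos : (0 : ℝ) < (ℓ : ℝ) := by linarith
  have hℓ1 : (0 : ℝ) < (ℓ : ℝ) - 1 := by linarith
  set n : ℝ := (V.card : ℝ) with hn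
  have hnℓ : (ℓ : ℝ) ≤ n := by rw [hn]; exact_mod_cast hV
  set S : ℝ := ∑ v ∈ V, b v with hS
  set c : ℝ := (2 * (ℓ : ℝ) - 1) / ((ℓ : ℝ) - 1) ^ 2 with hc
  have hcpos : 0 < c := by
    apply div_pos (by linarith) (by positivity)
  -- pointwise bound summed over erase
  have hstep : ∑ v ∈ V, (⌈a v⌉ : ℝ) ≤ S + (n - 1) / (ℓ : ℝ) + 1 := by
    have h1 : ∑ v ∈ V, (⌈a v⌉ : ℝ) =
        (⌈a r⌉ : ℝ) + ∑ v ∈ V.erase r, (⌈a v⌉ : ℝ) :=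
      (Finset.add_sum_erase V _ hr).symm
    have h2 : S = b r + ∑ v ∈ V.erase r, b v :=
      (Finset.add_sum_erase V _ hr).symm
    have h3 : ∑ v ∈ V.erase r, (⌈a v⌉ : ℝ) ≤
        ∑ v ∈ V.erase r, (b v + 1 / (ℓ : ℝ)) := by
      apply Finset.sum_le_sum
      intro v hv
      have hvV := Finset.mem_of_mem_erase hv
      have hvr := Finset.ne_of_mem_erase hv
      have := hab v hvV hvr
      linarith
    rw [Finset.sum_add_distrib, Finset.sum_const, nsmul_eq_mul] at h3
    have hcard : ((V.erase r).card : ℝ) = n - 1 := by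
      rw [Finset.card_erase_of_mem hr]
      have : 1 ≤ V.card := Finset.card_pos.mpr ⟨r, hr⟩
      rw [hn]
      push_cast [Nat.cast_sub this]
      ring
    rw [hcard] at h3
    have hroot : (⌈a r⌉ : ℝ) ≤ b r + 1 := by
      have := Int.ceil_lt_add_one (a r)
      linarith
    rw [h1]
    have : (n - 1) * (1 / (ℓ : ℝ)) = (n - 1) / (ℓ : ℝ) := by ring
    rw [this] at h3
    linarith [h2, h3, hroot]
  -- key inequality
  have hSlow : (n - 1) * ((ℓ : ℝ) - 1) / (ℓ : ℝ) ≤ S := by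
    have : (n - 1) * (1 - 1 / (ℓ : ℝ)) = (n - 1) * ((ℓ : ℝ) - 1) / (ℓ : ℝ) := by
      field_simp
    linarith [hsum, this.symm.le, this.le]
  have hkey : (n - 1) / (ℓ : ℝ) + 1 ≤ c * S := by
    have h4 : c * ((n - 1) * ((ℓ : ℝ) - 1) / (ℓ : ℝ)) ≤ c * S :=
      mul_le_mul_of_nonneg_left hSlow hcpos.le
    have h5 : (n - 1) / (ℓ : ℝ) + 1 ≤ c * ((n - 1) * ((ℓ : ℝ) - 1) / (ℓ : ℝ)) := by
      rw [hc]
      rw [div_add' _ _ _ (ne_of_gt hℓpos), div_mul_div_comm, div_le_div_iff₀ (by positivity) (by positivity)]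
      nlinarith [mul_nonneg (mul_nonneg (mul_nonneg hℓpos.le hℓpos.le) hℓ1.le) (sub_nonneg.2 hnℓ)]
    linarith
  linarith [hstep, hkey]
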